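/- Let P ∈ ℂ[X] and d ≥ 0, and let B denote the backward shift on sequences. Then there exist polynomials Q_{d,s} ∈ ℂ[X] for 0 ≤ s ≤ d such that for every λ ∈ ℂ with |λ| < 1, P(B)(kᵈλᵏ) = Σ_{s=0}^{d} Q_{d,s}(λ)·(kˢλᵏ), where Q_{d,d}(λ) = P(λ) and Q_{d,d−1}(λ) = d·λ·P′(λ). -/

import Mathlib

/-- The backward shift on sequences. -/
def shift (u : ℕ → ℂ) : ℕ → ℂ := fun k => u (k + 1)

/-- A polynomial `P` applied to the backward shift, acting on a sequence:
`(P(B)u)(k) = ∑ᵢ cᵢ u(k+i)`. -/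
noncomputable def polyShift (P : Polynomial ℂ) (u : ℕ → ℂ) : ℕ → ℂ :=
  fun k => ∑ i ∈ Finset.range (P.natDegree + 1), P.coeff i * u (k + i)

theorem polyShift_monomial_geom (P : Polynomial ℂ) (d : ℕ) :
    ∃ Q : ℕ → Polynomial ℂ,
      ∀ lam : ℂ, ‖lam‖ < 1 →
        (∀ k : ℕ, polyShift P (fun k => (k : ℂ) ^ d * lam ^ k) k
            = ∑ s ∈ Finset.range (d + 1), (Q s).eval lam * ((k : ℂ) ^ s * lam ^ k)) ∧
        (Q d).eval lam = P.eval lam ∧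
        (1 ≤ d → (Q (d - 1)).eval lam = (d : ℂ) * lam * P.derivative.eval lam) := by
  classical
  set n := P.natDegree with hn
  refine ⟨fun s => (d.choose s : ℂ) • ∑ i ∈ Finset.range (n + 1),
      Polynomial.C (P.coeff i * (i : ℂ) ^ (d - s)) * Polynomial.X ^ i, fun lam _ => ?_⟩
  have hQ : ∀ s, ((d.choose s : ℂ) • ∑ i ∈ Finset.range (n + 1),
      Polynomial.C (P.coeff i * (i : ℂ) ^ (d - s)) * Polynomial.X ^ i).eval lam
      = (d.choose s : ℂ) * ∑ i ∈ Finset.range (n + 1),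
          P.coeff i * (i : ℂ) ^ (d - s) * lam ^ i := by
    intro s
    simp [Polynomial.eval_finset_sum]
  refine ⟨fun k => ?_, ?_, ?_⟩
  · unfold polyShift
    rw [← hn]
    calc ∑ i ∈ Finset.range (n + 1), P.coeff i * (((k + i : ℕ) : ℂ) ^ d * lam ^ (k + i))
        = ∑ i ∈ Finset.range (n + 1), ∑ s ∈ Finset.range (d + 1),
            ((d.choose s : ℂ) * (P.coeff i * (i : ℂ) ^ (d - s) * lam ^ i))
              * ((k : ℂ) ^ s * lam ^ k) := by
          refine Finset.sum_congr rfl fun i _ => ?_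
          have : ((k + i : ℕ) : ℂ) ^ d
              = ∑ s ∈ Finset.range (d + 1), (k : ℂ) ^ s * (i : ℂ) ^ (d - s)
                  * (d.choose s : ℂ) := by
            push_cast
            exact add_pow _ _ d
          rw [this, pow_add, Finset.sum_mul, Finset.mul_sum]
          exact Finset.sum_congr rfl fun s _ => by ring
      _ = ∑ s ∈ Finset.range (d + 1),
            ((d.choose s : ℂ) * ∑ i ∈ Finset.range (n + 1),
              P.coeff i * (i : ℂ) ^ (d - s) * lam ^ i) * ((k : ℂ) ^ s * lam ^ k) := by
          rw [Finset.sum_comm]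
          refine Finset.sum_congr rfl fun s _ => ?_
          rw [Finset.mul_sum, Finset.sum_mul]
      _ = _ := by
          exact Finset.sum_congr rfl fun s _ => by rw [hQ]
  · rw [hQ]
    simp only [Nat.choose_self, Nat.cast_one, one_mul, Nat.sub_self, pow_zero, mul_one]
    exact (Polynomial.eval_eq_sum_range lam).symm
  · intro hd
    rw [hQ]
    have hc : (d.choose (d - 1) : ℂ) = (d : ℂ) := by
      cases d with
      | zero => omega
      | succ m => simp [Nat.succ_sub_one, Nat.choose_succ_self_right]
    have hds : d - (d - 1) = 1 := by omega
    have hdlt : P.derivative.natDegree < n + 1 :=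
      lt_of_le_of_lt P.natDegree_derivative_le (by omega)
    have hder : P.derivative.eval lam
        = ∑ i ∈ Finset.range (n + 1), P.coeff (i + 1) * ((i : ℂ) + 1) * lam ^ i := by
      rw [Polynomial.eval_eq_sum_range' hdlt]
      exact Finset.sum_congr rfl fun i _ => by rw [Polynomial.coeff_derivative]
    have hlast : P.coeff (n + 1) = 0 := P.coeff_natDegree_succ_eq_zero
    have key : ∑ i ∈ Finset.range (n + 1), P.coeff i * (i : ℂ) ^ 1 * lam ^ i
        = ∑ i ∈ Finset.range (n + 1), P.coeff (i + 1) * ((i : ℂ) + 1) * lam ^ (i + 1) := by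
      rw [Finset.sum_range_succ', Finset.sum_range_succ]
      simp only [hlast, Nat.cast_zero, zero_mul, mul_zero, add_zero, pow_one, pow_zero]
      refine Finset.sum_congr rfl fun i _ => ?_
      push_cast
      ring
    rw [hc, hds, hder, key, Finset.mul_sum, Finset.mul_sum]
    exact Finset.sum_congr rfl fun i _ => by ring
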